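/- There is a universal constant C>0 such that for all smooth u,v:ℝ×ℝ³→ℝ, all α,β∈{0,1,2,3}, and all (t,x)∈[0,∞)×ℝ³: |Q_{αβ}(u,v)(t,x)| ≤ C ⟨t+|x|⟩^{-1} ( Σ_{Z∈V}|Zu(t,x)|·|∂v(t,x)| + |∂u(t,x)|·Σ_{Z∈V}|Zv(t,x)| ), where |∂f| := Σ_{γ=0}³ |∂_γ f|. -/

import Mathlib

open MeasureTheory Real

noncomputable section

/-- Spacetime points: index `0` is time, indices `1,2,3` are space. -/
abbrev Pt : Type := Fin 4 → ℝ

/-- Spatial points in ℝ³. -/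
abbrev Sp : Type := Fin 3 → ℝ

/-- Build a spacetime point from a time and a spatial point. -/
def pt (t : ℝ) (x : Sp) : Pt := Fin.cons t x

/-- Partial derivative ∂_i (i = 0 is ∂_t). -/
def pd (i : Fin 4) (u : Pt → ℝ) : Pt → ℝ := fun p => fderiv ℝ u p (Pi.single i 1)

/-- Euclidean norm of a spatial point. -/
def rnorm (x : Sp) : ℝ := Real.sqrt (∑ a, (x a) ^ 2)

/-- Japanese bracket ⟨s⟩ = √(1+s²). -/
def jb (s : ℝ) : ℝ := Real.sqrt (1 + s ^ 2)

/-- Wave operator ∂_t² − Δ. -/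
def box (u : Pt → ℝ) : Pt → ℝ := fun p =>
  pd 0 (pd 0 u) p - (pd 1 (pd 1 u) p + pd 2 (pd 2 u) p + pd 3 (pd 3 u) p)

/-- Rotation Ω_{ab} = x_a ∂_b − x_b ∂_a. -/
def Omg (a b : Fin 4) (u : Pt → ℝ) : Pt → ℝ := fun p => p a * pd b u p - p b * pd a u p

/-- Lorentz boost L_a = x_a ∂_t + t ∂_a. -/
def Lb (a : Fin 4) (u : Pt → ℝ) : Pt → ℝ := fun p => p a * pd 0 u p + p 0 * pd a u p

/-- Scaling vector field S = t ∂_t + Σ x_a ∂_a. -/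
def Sc (u : Pt → ℝ) : Pt → ℝ := fun p => ∑ i, p i * pd i u p

/-- The ten-field family V = {∂_α, Ω_{ab}, L_a}. -/
def VZ : Fin 10 → (Pt → ℝ) → Pt → ℝ :=
  ![pd 0, pd 1, pd 2, pd 3, Omg 1 2, Omg 1 3, Omg 2 3, Lb 1, Lb 2, Lb 3]

/-- The eleven-field family Γ = V ∪ {S}. -/
def GZ : Fin 11 → (Pt → ℝ) → Pt → ℝ :=
  ![pd 0, pd 1, pd 2, pd 3, Omg 1 2, Omg 1 3, Omg 2 3, Lb 1, Lb 2, Lb 3, Sc]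

/-- Composition Z^I of fields from V. -/
def compV (I : List (Fin 10)) (u : Pt → ℝ) : Pt → ℝ := I.foldr (fun i f => VZ i f) u

/-- Composition Γ^I of fields from V ∪ {S}. -/
def compG (I : List (Fin 11)) (u : Pt → ℝ) : Pt → ℝ := I.foldr (fun i f => GZ i f) u

/-- Null form Q₀(u,v) = −∂_t u ∂_t v + Σ_a ∂_a u ∂_a v. -/
def Q0 (u v : Pt → ℝ) : Pt → ℝ := fun p =>
  -(pd 0 u p * pd 0 v p) + ∑ a : Fin 3, pd a.succ u p * pd a.succ v p

/-- Null form Q_{αβ}(u,v) = ∂_α u ∂_β v − ∂_β u ∂_α v. -/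
def Qab (α β : Fin 4) (u v : Pt → ℝ) : Pt → ℝ := fun p =>
  pd α u p * pd β v p - pd β u p * pd α v p

/-- Good derivative G_a = (x_a/r) ∂_t + ∂_a. -/
def Ga (a : Fin 3) (u : Pt → ℝ) : Pt → ℝ := fun p =>
  (p a.succ / Real.sqrt ((p 1) ^ 2 + (p 2) ^ 2 + (p 3) ^ 2)) * pd 0 u p + pd a.succ u p

/-- L² norm of a function on ℝ³. -/
def L2norm (g : Sp → ℝ) : ℝ := (∫ x : Sp, (g x) ^ 2) ^ (1/2 : ℝ)

/-- Spatial partial derivative on ℝ³. -/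
def pd3 (a : Fin 3) (f : Sp → ℝ) : Sp → ℝ := fun x => fderiv ℝ f x (Pi.single a 1)

/-- Composition ∇^I of spatial partial derivatives. -/
def compD (I : List (Fin 3)) (f : Sp → ℝ) : Sp → ℝ := I.foldr (fun a g => pd3 a g) f

/-- Euclidean norm of the spatial gradient. -/
def gradNorm (f : Sp → ℝ) (x : Sp) : ℝ := Real.sqrt (∑ a, (pd3 a f x) ^ 2)

section NFAux


lemma pb {z d S T A : ℝ} (hz : |z| ≤ S) (hd : |d| ≤ T) (hST : S * T ≤ A) : |z * d| ≤ A := by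
  rw [abs_mul]
  exact le_trans (mul_le_mul hz hd (abs_nonneg d) ((abs_nonneg z).trans hz)) hST

lemma pbneg {z d S T A : ℝ} (hz : |z| ≤ S) (hd : |d| ≤ T) (hST : S * T ≤ A) : |-(z * d)| ≤ A := by
  rw [abs_neg]; exact pb hz hd hST

lemma piece0 {a b A : ℝ} (h1 : |a| ≤ A) (h2 : |b| ≤ A) : |a - b| ≤ 2 * A := by
  have h := abs_sub a b
  linarith

lemma piece2 {c q e1 e2 A : ℝ} (h : c * q = e1 + e2) (h1 : |e1| ≤ A) (h2 : |e2| ≤ A) :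
    |c| * |q| ≤ 3 * A := by
  rw [← abs_mul, h]
  have h3 := abs_add_le e1 e2
  have hA : 0 ≤ A := (abs_nonneg e1).trans h1
  linarith

lemma piece3 {c q e1 e2 e3 A : ℝ} (h : c * q = e1 + e2 + e3) (h1 : |e1| ≤ A) (h2 : |e2| ≤ A)
    (h3 : |e3| ≤ A) : |c| * |q| ≤ 3 * A := by
  rw [← abs_mul, h]
  have g1 := abs_add_le (e1 + e2) e3
  have g2 := abs_add_le e1 e2
  linarith

lemma engine {t c1 c2 c3 q A : ℝ} (ht : 0 ≤ t) (h0 : |q| ≤ 2 * A)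
    (hT : |t| * |q| ≤ 3 * A) (h1 : |c1| * |q| ≤ 3 * A) (h2 : |c2| * |q| ≤ 3 * A)
    (h3 : |c3| * |q| ≤ 3 * A) :
    (1 + t + (|c1| + |c2| + |c3|)) * |q| ≤ 14 * A := by
  have e : (1 + t + (|c1| + |c2| + |c3|)) * |q|
      = |q| + |t| * |q| + (|c1| * |q| + |c2| * |q| + |c3| * |q|) := by
    rw [abs_of_nonneg ht]; ring
  linarith [e]

set_option maxHeartbeats 1000000 in
lemma main_ineq (f g : Fin 4 → ℝ) (t c1 c2 c3 : ℝ) (ht : 0 ≤ t) (α β : Fin 4) :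
    (1 + t + (|c1| + |c2| + |c3|)) * |f α * g β - f β * g α| ≤
      14 * ((|f 0| + |f 1| + |f 2| + |f 3|
             + |c1 * f 2 - c2 * f 1| + |c1 * f 3 - c3 * f 1| + |c2 * f 3 - c3 * f 2|
             + |c1 * f 0 + t * f 1| + |c2 * f 0 + t * f 2| + |c3 * f 0 + t * f 3|)
            * (|g 0| + |g 1| + |g 2| + |g 3|)
          + (|f 0| + |f 1| + |f 2| + |f 3|)
            * (|g 0| + |g 1| + |g 2| + |g 3|
             + |c1 * g 2 - c2 * g 1| + |c1 * g 3 - c3 * g 1| + |c2 * g 3 - c3 * g 2|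
             + |c1 * g 0 + t * g 1| + |c2 * g 0 + t * g 2| + |c3 * g 0 + t * g 3|)) := by
  set Tu := |f 0| + |f 1| + |f 2| + |f 3| with hTu
  set Tv := |g 0| + |g 1| + |g 2| + |g 3| with hTv
  set Su := Tu + |c1 * f 2 - c2 * f 1| + |c1 * f 3 - c3 * f 1| + |c2 * f 3 - c3 * f 2|
      + |c1 * f 0 + t * f 1| + |c2 * f 0 + t * f 2| + |c3 * f 0 + t * f 3| with hSu
  set Sv := Tv + |c1 * g 2 - c2 * g 1| + |c1 * g 3 - c3 * g 1| + |c2 * g 3 - c3 * g 2|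
      + |c1 * g 0 + t * g 1| + |c2 * g 0 + t * g 2| + |c3 * g 0 + t * g 3| with hSv
  set A := Su * Tv + Tu * Sv with hA
  have hTu0 : 0 ≤ Tu := by rw [hTu]; positivity
  have hTv0 : 0 ≤ Tv := by rw [hTv]; positivity
  have hSu0 : 0 ≤ Su := by
    rw [hSu]
    have := abs_nonneg (c1 * f 2 - c2 * f 1); have := abs_nonneg (c1 * f 3 - c3 * f 1)
    have := abs_nonneg (c2 * f 3 - c3 * f 2); have := abs_nonneg (c1 * f 0 + t * f 1)
    have := abs_nonneg (c2 * f 0 + t * f 2); have := abs_nonneg (c3 * f 0 + t * f 3)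
    linarith
  have hSv0 : 0 ≤ Sv := by
    rw [hSv]
    have := abs_nonneg (c1 * g 2 - c2 * g 1); have := abs_nonneg (c1 * g 3 - c3 * g 1)
    have := abs_nonneg (c2 * g 3 - c3 * g 2); have := abs_nonneg (c1 * g 0 + t * g 1)
    have := abs_nonneg (c2 * g 0 + t * g 2); have := abs_nonneg (c3 * g 0 + t * g 3)
    linarith
  have hTuSu : Tu ≤ Su := by
    rw [hSu]
    have := abs_nonneg (c1 * f 2 - c2 * f 1); have := abs_nonneg (c1 * f 3 - c3 * f 1)
    have := abs_nonneg (c2 * f 3 - c3 * f 2); have := abs_nonneg (c1 * f 0 + t * f 1)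
    have := abs_nonneg (c2 * f 0 + t * f 2); have := abs_nonneg (c3 * f 0 + t * f 3)
    linarith
  have hTvSv : Tv ≤ Sv := by
    rw [hSv]
    have := abs_nonneg (c1 * g 2 - c2 * g 1); have := abs_nonneg (c1 * g 3 - c3 * g 1)
    have := abs_nonneg (c2 * g 3 - c3 * g 2); have := abs_nonneg (c1 * g 0 + t * g 1)
    have := abs_nonneg (c2 * g 0 + t * g 2); have := abs_nonneg (c3 * g 0 + t * g 3)
    linarith
  have hST : Su * Tv ≤ A := by rw [hA]; nlinarith [mul_nonneg hTu0 hSv0]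
  have hTS : Tu * Sv ≤ A := by rw [hA]; nlinarith [mul_nonneg hSu0 hTv0]
  have hTT : Tu * Tv ≤ A := le_trans (mul_le_mul_of_nonneg_right hTuSu hTv0) hST
  have hA0 : 0 ≤ A := (mul_nonneg hSu0 hTv0).trans hST
  have hf0 : |f 0| ≤ Tu := by rw [hTu]; have := abs_nonneg (f 1); have := abs_nonneg (f 2); have := abs_nonneg (f 3); linarith
  have hf1 : |f 1| ≤ Tu := by rw [hTu]; have := abs_nonneg (f 0); have := abs_nonneg (f 2); have := abs_nonneg (f 3); linarith
  have hf2 : |f 2| ≤ Tu := by rw [hTu]; have := abs_nonneg (f 0); have := abs_nonneg (f 1); have := abs_nonneg (f 3); linarith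
  have hf3 : |f 3| ≤ Tu := by rw [hTu]; have := abs_nonneg (f 0); have := abs_nonneg (f 1); have := abs_nonneg (f 2); linarith
  have hg0 : |g 0| ≤ Tv := by rw [hTv]; have := abs_nonneg (g 1); have := abs_nonneg (g 2); have := abs_nonneg (g 3); linarith
  have hg1 : |g 1| ≤ Tv := by rw [hTv]; have := abs_nonneg (g 0); have := abs_nonneg (g 2); have := abs_nonneg (g 3); linarith
  have hg2 : |g 2| ≤ Tv := by rw [hTv]; have := abs_nonneg (g 0); have := abs_nonneg (g 1); have := abs_nonneg (g 3); linarith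
  have hg3 : |g 3| ≤ Tv := by rw [hTv]; have := abs_nonneg (g 0); have := abs_nonneg (g 1); have := abs_nonneg (g 2); linarith
  have memSu : ∀ z : ℝ,
      (z = c1 * f 2 - c2 * f 1 ∨ z = c1 * f 3 - c3 * f 1 ∨ z = c2 * f 3 - c3 * f 2 ∨
       z = c1 * f 0 + t * f 1 ∨ z = c2 * f 0 + t * f 2 ∨ z = c3 * f 0 + t * f 3) → |z| ≤ Su := by
    intro z hz
    rw [hSu]
    have := abs_nonneg (c1 * f 2 - c2 * f 1); have := abs_nonneg (c1 * f 3 - c3 * f 1)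
    have := abs_nonneg (c2 * f 3 - c3 * f 2); have := abs_nonneg (c1 * f 0 + t * f 1)
    have := abs_nonneg (c2 * f 0 + t * f 2); have := abs_nonneg (c3 * f 0 + t * f 3)
    rcases hz with h|h|h|h|h|h <;> rw [h] <;> linarith
  have memSv : ∀ z : ℝ,
      (z = c1 * g 2 - c2 * g 1 ∨ z = c1 * g 3 - c3 * g 1 ∨ z = c2 * g 3 - c3 * g 2 ∨
       z = c1 * g 0 + t * g 1 ∨ z = c2 * g 0 + t * g 2 ∨ z = c3 * g 0 + t * g 3) → |z| ≤ Sv := by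
    intro z hz
    rw [hSv]
    have := abs_nonneg (c1 * g 2 - c2 * g 1); have := abs_nonneg (c1 * g 3 - c3 * g 1)
    have := abs_nonneg (c2 * g 3 - c3 * g 2); have := abs_nonneg (c1 * g 0 + t * g 1)
    have := abs_nonneg (c2 * g 0 + t * g 2); have := abs_nonneg (c3 * g 0 + t * g 3)
    rcases hz with h|h|h|h|h|h <;> rw [h] <;> linarith
  have hO12f : |c1 * f 2 - c2 * f 1| ≤ Su := memSu _ (Or.inl rfl)
  have hO13f : |c1 * f 3 - c3 * f 1| ≤ Su := memSu _ (Or.inr (Or.inl rfl))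
  have hO23f : |c2 * f 3 - c3 * f 2| ≤ Su := memSu _ (Or.inr (Or.inr (Or.inl rfl)))
  have hL1f : |c1 * f 0 + t * f 1| ≤ Su := memSu _ (Or.inr (Or.inr (Or.inr (Or.inl rfl))))
  have hL2f : |c2 * f 0 + t * f 2| ≤ Su := memSu _ (Or.inr (Or.inr (Or.inr (Or.inr (Or.inl rfl)))))
  have hL3f : |c3 * f 0 + t * f 3| ≤ Su := memSu _ (Or.inr (Or.inr (Or.inr (Or.inr (Or.inr rfl)))))
  have hO12g : |c1 * g 2 - c2 * g 1| ≤ Sv := memSv _ (Or.inl rfl)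
  have hO13g : |c1 * g 3 - c3 * g 1| ≤ Sv := memSv _ (Or.inr (Or.inl rfl))
  have hO23g : |c2 * g 3 - c3 * g 2| ≤ Sv := memSv _ (Or.inr (Or.inr (Or.inl rfl)))
  have hL1g : |c1 * g 0 + t * g 1| ≤ Sv := memSv _ (Or.inr (Or.inr (Or.inr (Or.inl rfl))))
  have hL2g : |c2 * g 0 + t * g 2| ≤ Sv := memSv _ (Or.inr (Or.inr (Or.inr (Or.inr (Or.inl rfl)))))
  have hL3g : |c3 * g 0 + t * g 3| ≤ Sv := memSv _ (Or.inr (Or.inr (Or.inr (Or.inr (Or.inr rfl)))))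
  have hO21f : |c2 * f 1 - c1 * f 2| ≤ Su := by rw [abs_sub_comm]; exact hO12f
  have hO31f : |c3 * f 1 - c1 * f 3| ≤ Su := by rw [abs_sub_comm]; exact hO13f
  have hO32f : |c3 * f 2 - c2 * f 3| ≤ Su := by rw [abs_sub_comm]; exact hO23f
  -- case lemmas
  have case01 : (1 + t + (|c1| + |c2| + |c3|)) * |f 0 * g 1 - f 1 * g 0| ≤ 14 * A := by
    refine engine ht (piece0 (pb hf0 hg1 hTT) (pb hf1 hg0 hTT)) ?_ ?_ ?_ ?_
    · exact piece2 (by ring : t * (f 0 * g 1 - f 1 * g 0)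
        = f 0 * (c1 * g 0 + t * g 1) + -((c1 * f 0 + t * f 1) * g 0))
        (pb hf0 hL1g hTS) (pbneg hL1f hg0 hST)
    · exact piece2 (by ring : c1 * (f 0 * g 1 - f 1 * g 0)
        = (c1 * f 0 + t * f 1) * g 1 + -(f 1 * (c1 * g 0 + t * g 1)))
        (pb hL1f hg1 hST) (pbneg hf1 hL1g hTS)
    · exact piece3 (by ring : c2 * (f 0 * g 1 - f 1 * g 0)
        = (c2 * f 0 + t * f 2) * g 1 + -((c2 * f 1 - c1 * f 2) * g 0)
          + -(f 2 * (c1 * g 0 + t * g 1)))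
        (pb hL2f hg1 hST) (pbneg hO21f hg0 hST) (pbneg hf2 hL1g hTS)
    · exact piece3 (by ring : c3 * (f 0 * g 1 - f 1 * g 0)
        = (c3 * f 0 + t * f 3) * g 1 + -((c3 * f 1 - c1 * f 3) * g 0)
          + -(f 3 * (c1 * g 0 + t * g 1)))
        (pb hL3f hg1 hST) (pbneg hO31f hg0 hST) (pbneg hf3 hL1g hTS)
  have case02 : (1 + t + (|c1| + |c2| + |c3|)) * |f 0 * g 2 - f 2 * g 0| ≤ 14 * A := by
    refine engine ht (piece0 (pb hf0 hg2 hTT) (pb hf2 hg0 hTT)) ?_ ?_ ?_ ?_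
    · exact piece2 (by ring : t * (f 0 * g 2 - f 2 * g 0)
        = f 0 * (c2 * g 0 + t * g 2) + -((c2 * f 0 + t * f 2) * g 0))
        (pb hf0 hL2g hTS) (pbneg hL2f hg0 hST)
    · exact piece3 (by ring : c1 * (f 0 * g 2 - f 2 * g 0)
        = (c1 * f 0 + t * f 1) * g 2 + -((c1 * f 2 - c2 * f 1) * g 0)
          + -(f 1 * (c2 * g 0 + t * g 2)))
        (pb hL1f hg2 hST) (pbneg hO12f hg0 hST) (pbneg hf1 hL2g hTS)
    · exact piece2 (by ring : c2 * (f 0 * g 2 - f 2 * g 0)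
        = (c2 * f 0 + t * f 2) * g 2 + -(f 2 * (c2 * g 0 + t * g 2)))
        (pb hL2f hg2 hST) (pbneg hf2 hL2g hTS)
    · exact piece3 (by ring : c3 * (f 0 * g 2 - f 2 * g 0)
        = (c3 * f 0 + t * f 3) * g 2 + -((c3 * f 2 - c2 * f 3) * g 0)
          + -(f 3 * (c2 * g 0 + t * g 2)))
        (pb hL3f hg2 hST) (pbneg hO32f hg0 hST) (pbneg hf3 hL2g hTS)
  have case03 : (1 + t + (|c1| + |c2| + |c3|)) * |f 0 * g 3 - f 3 * g 0| ≤ 14 * A := by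
    refine engine ht (piece0 (pb hf0 hg3 hTT) (pb hf3 hg0 hTT)) ?_ ?_ ?_ ?_
    · exact piece2 (by ring : t * (f 0 * g 3 - f 3 * g 0)
        = f 0 * (c3 * g 0 + t * g 3) + -((c3 * f 0 + t * f 3) * g 0))
        (pb hf0 hL3g hTS) (pbneg hL3f hg0 hST)
    · exact piece3 (by ring : c1 * (f 0 * g 3 - f 3 * g 0)
        = (c1 * f 0 + t * f 1) * g 3 + -((c1 * f 3 - c3 * f 1) * g 0)
          + -(f 1 * (c3 * g 0 + t * g 3)))
        (pb hL1f hg3 hST) (pbneg hO13f hg0 hST) (pbneg hf1 hL3g hTS)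
    · exact piece3 (by ring : c2 * (f 0 * g 3 - f 3 * g 0)
        = (c2 * f 0 + t * f 2) * g 3 + -((c2 * f 3 - c3 * f 2) * g 0)
          + -(f 2 * (c3 * g 0 + t * g 3)))
        (pb hL2f hg3 hST) (pbneg hO23f hg0 hST) (pbneg hf2 hL3g hTS)
    · exact piece2 (by ring : c3 * (f 0 * g 3 - f 3 * g 0)
        = (c3 * f 0 + t * f 3) * g 3 + -(f 3 * (c3 * g 0 + t * g 3)))
        (pb hL3f hg3 hST) (pbneg hf3 hL3g hTS)
  have case12 : (1 + t + (|c1| + |c2| + |c3|)) * |f 1 * g 2 - f 2 * g 1| ≤ 14 * A := by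
    refine engine ht (piece0 (pb hf1 hg2 hTT) (pb hf2 hg1 hTT)) ?_ ?_ ?_ ?_
    · exact piece3 (by ring : t * (f 1 * g 2 - f 2 * g 1)
        = (c1 * f 0 + t * f 1) * g 2 + -((c2 * f 0 + t * f 2) * g 1)
          + -(f 0 * (c1 * g 2 - c2 * g 1)))
        (pb hL1f hg2 hST) (pbneg hL2f hg1 hST) (pbneg hf0 hO12g hTS)
    · exact piece2 (by ring : c1 * (f 1 * g 2 - f 2 * g 1)
        = -((c1 * f 2 - c2 * f 1) * g 1) + f 1 * (c1 * g 2 - c2 * g 1))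
        (pbneg hO12f hg1 hST) (pb hf1 hO12g hTS)
    · exact piece2 (by ring : c2 * (f 1 * g 2 - f 2 * g 1)
        = (c2 * f 1 - c1 * f 2) * g 2 + f 2 * (c1 * g 2 - c2 * g 1))
        (pb hO21f hg2 hST) (pb hf2 hO12g hTS)
    · exact piece3 (by ring : c3 * (f 1 * g 2 - f 2 * g 1)
        = (c3 * f 1 - c1 * f 3) * g 2 + -((c3 * f 2 - c2 * f 3) * g 1)
          + f 3 * (c1 * g 2 - c2 * g 1))
        (pb hO31f hg2 hST) (pbneg hO32f hg1 hST) (pb hf3 hO12g hTS)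
  have case13 : (1 + t + (|c1| + |c2| + |c3|)) * |f 1 * g 3 - f 3 * g 1| ≤ 14 * A := by
    refine engine ht (piece0 (pb hf1 hg3 hTT) (pb hf3 hg1 hTT)) ?_ ?_ ?_ ?_
    · exact piece3 (by ring : t * (f 1 * g 3 - f 3 * g 1)
        = (c1 * f 0 + t * f 1) * g 3 + -((c3 * f 0 + t * f 3) * g 1)
          + -(f 0 * (c1 * g 3 - c3 * g 1)))
        (pb hL1f hg3 hST) (pbneg hL3f hg1 hST) (pbneg hf0 hO13g hTS)
    · exact piece2 (by ring : c1 * (f 1 * g 3 - f 3 * g 1)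
        = -((c1 * f 3 - c3 * f 1) * g 1) + f 1 * (c1 * g 3 - c3 * g 1))
        (pbneg hO13f hg1 hST) (pb hf1 hO13g hTS)
    · exact piece3 (by ring : c2 * (f 1 * g 3 - f 3 * g 1)
        = (c2 * f 1 - c1 * f 2) * g 3 + -((c2 * f 3 - c3 * f 2) * g 1)
          + f 2 * (c1 * g 3 - c3 * g 1))
        (pb hO21f hg3 hST) (pbneg hO23f hg1 hST) (pb hf2 hO13g hTS)
    · exact piece2 (by ring : c3 * (f 1 * g 3 - f 3 * g 1)
        = (c3 * f 1 - c1 * f 3) * g 3 + f 3 * (c1 * g 3 - c3 * g 1))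
        (pb hO31f hg3 hST) (pb hf3 hO13g hTS)
  have case23 : (1 + t + (|c1| + |c2| + |c3|)) * |f 2 * g 3 - f 3 * g 2| ≤ 14 * A := by
    refine engine ht (piece0 (pb hf2 hg3 hTT) (pb hf3 hg2 hTT)) ?_ ?_ ?_ ?_
    · exact piece3 (by ring : t * (f 2 * g 3 - f 3 * g 2)
        = (c2 * f 0 + t * f 2) * g 3 + -((c3 * f 0 + t * f 3) * g 2)
          + -(f 0 * (c2 * g 3 - c3 * g 2)))
        (pb hL2f hg3 hST) (pbneg hL3f hg2 hST) (pbneg hf0 hO23g hTS)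
    · exact piece3 (by ring : c1 * (f 2 * g 3 - f 3 * g 2)
        = (c1 * f 2 - c2 * f 1) * g 3 + -((c1 * f 3 - c3 * f 1) * g 2)
          + f 1 * (c2 * g 3 - c3 * g 2))
        (pb hO12f hg3 hST) (pbneg hO13f hg2 hST) (pb hf1 hO23g hTS)
    · exact piece2 (by ring : c2 * (f 2 * g 3 - f 3 * g 2)
        = -((c2 * f 3 - c3 * f 2) * g 2) + f 2 * (c2 * g 3 - c3 * g 2))
        (pbneg hO23f hg2 hST) (pb hf2 hO23g hTS)
    · exact piece2 (by ring : c3 * (f 2 * g 3 - f 3 * g 2)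
        = (c3 * f 2 - c2 * f 3) * g 3 + f 3 * (c2 * g 3 - c3 * g 2))
        (pb hO32f hg3 hST) (pb hf3 hO23g hTS)
  have hdiag : ∀ γ : Fin 4, (1 + t + (|c1| + |c2| + |c3|)) * |f γ * g γ - f γ * g γ| ≤ 14 * A := by
    intro γ
    simp only [sub_self, abs_zero, mul_zero]
    linarith
  fin_cases α <;> fin_cases β
  · exact hdiag 0
  · exact case01
  · exact case02
  · exact case03
  · rw [abs_sub_comm]; exact case01
  · exact hdiag 1
  · exact case12
  · exact case13
  · rw [abs_sub_comm]; exact case02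
  · rw [abs_sub_comm]; exact case12
  · exact hdiag 2
  · exact case23
  · rw [abs_sub_comm]; exact case03
  · rw [abs_sub_comm]; exact case13
  · rw [abs_sub_comm]; exact case23
  · exact hdiag 3

lemma jb_pos (s : ℝ) : 0 < jb s := Real.sqrt_pos.mpr (by positivity)

lemma jb_le (s : ℝ) : jb s ≤ 1 + |s| := by
  have h : (1 : ℝ) + s ^ 2 ≤ (1 + |s|) ^ 2 := by nlinarith [abs_nonneg s, sq_abs s]
  calc jb s ≤ Real.sqrt ((1 + |s|) ^ 2) := Real.sqrt_le_sqrt h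
    _ = 1 + |s| := Real.sqrt_sq (by positivity)

lemma rnorm_nonneg (x : Sp) : 0 ≤ rnorm x := Real.sqrt_nonneg _

lemma rnorm_le (x : Sp) : rnorm x ≤ |x 0| + |x 1| + |x 2| := by
  rw [rnorm, Fin.sum_univ_three]
  have h : x 0 ^ 2 + x 1 ^ 2 + x 2 ^ 2 ≤ (|x 0| + |x 1| + |x 2|) ^ 2 := by
    nlinarith [abs_nonneg (x 0), abs_nonneg (x 1), abs_nonneg (x 2), sq_abs (x 0),
      sq_abs (x 1), sq_abs (x 2), mul_nonneg (abs_nonneg (x 0)) (abs_nonneg (x 1)),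
      mul_nonneg (abs_nonneg (x 0)) (abs_nonneg (x 2)),
      mul_nonneg (abs_nonneg (x 1)) (abs_nonneg (x 2))]
  calc Real.sqrt (x 0 ^ 2 + x 1 ^ 2 + x 2 ^ 2) ≤ Real.sqrt ((|x 0| + |x 1| + |x 2|) ^ 2) :=
      Real.sqrt_le_sqrt h
    _ = _ := Real.sqrt_sq (by positivity)

lemma finish' {J B q A : ℝ} (hJ : 0 < J) (hJB : J ≤ B) (h : B * |q| ≤ 14 * A) :
    |q| ≤ 14 * J⁻¹ * A := by
  have h1 : J * |q| ≤ 14 * A :=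
    le_trans (mul_le_mul_of_nonneg_right hJB (abs_nonneg q)) h
  have h2 : |q| = J⁻¹ * (J * |q|) := by field_simp
  calc |q| = J⁻¹ * (J * |q|) := h2
    _ ≤ J⁻¹ * (14 * A) := mul_le_mul_of_nonneg_left h1 (inv_nonneg.mpr hJ.le)
    _ = 14 * J⁻¹ * A := by ring

end NFAux

/-- Q_{αβ} gains a factor ⟨t+|x|⟩⁻¹ against the fields of V. -/
theorem stmt_7 :
    ∃ C : ℝ, 0 < C ∧ ∀ u v : Pt → ℝ, ContDiff ℝ (⊤ : ℕ∞) u → ContDiff ℝ (⊤ : ℕ∞) v →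
      ∀ α β : Fin 4, ∀ (t : ℝ), 0 ≤ t → ∀ x : Sp,
        |Qab α β u v (pt t x)| ≤ C * (jb (t + rnorm x))⁻¹ *
          ((∑ i : Fin 10, |VZ i u (pt t x)|) * (∑ γ : Fin 4, |pd γ v (pt t x)|) +
           (∑ γ : Fin 4, |pd γ u (pt t x)|) * (∑ i : Fin 10, |VZ i v (pt t x)|)) := by
  refine ⟨14, by norm_num, ?_⟩
  intro u v hu hv α β t ht x
  have hp0 : pt t x 0 = t := rfl
  have hp1 : pt t x 1 = x 0 := rfl
  have hp2 : pt t x 2 = x 1 := rfl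
  have hp3 : pt t x 3 = x 2 := rfl
  have hJ : 0 < jb (t + rnorm x) := jb_pos _
  have hJle : jb (t + rnorm x) ≤ 1 + t + (|x 0| + |x 1| + |x 2|) := by
    have h1 := jb_le (t + rnorm x)
    have h2 : |t + rnorm x| = t + rnorm x := abs_of_nonneg (by linarith [rnorm_nonneg x])
    have h3 := rnorm_le x
    linarith
  have key := main_ineq (fun i => pd i u (pt t x)) (fun i => pd i v (pt t x))
    t (x 0) (x 1) (x 2) ht α β
  have e1 : (∑ i : Fin 10, |VZ i u (pt t x)|)
      = |pd 0 u (pt t x)| + |pd 1 u (pt t x)| + |pd 2 u (pt t x)| + |pd 3 u (pt t x)|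
        + |x 0 * pd 2 u (pt t x) - x 1 * pd 1 u (pt t x)|
        + |x 0 * pd 3 u (pt t x) - x 2 * pd 1 u (pt t x)|
        + |x 1 * pd 3 u (pt t x) - x 2 * pd 2 u (pt t x)|
        + |x 0 * pd 0 u (pt t x) + t * pd 1 u (pt t x)|
        + |x 1 * pd 0 u (pt t x) + t * pd 2 u (pt t x)|
        + |x 2 * pd 0 u (pt t x) + t * pd 3 u (pt t x)| := by
    simp [VZ, Omg, Lb, Fin.sum_univ_succ, hp0, hp1, hp2, hp3]
    ring
  have e2 : (∑ i : Fin 10, |VZ i v (pt t x)|)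
      = |pd 0 v (pt t x)| + |pd 1 v (pt t x)| + |pd 2 v (pt t x)| + |pd 3 v (pt t x)|
        + |x 0 * pd 2 v (pt t x) - x 1 * pd 1 v (pt t x)|
        + |x 0 * pd 3 v (pt t x) - x 2 * pd 1 v (pt t x)|
        + |x 1 * pd 3 v (pt t x) - x 2 * pd 2 v (pt t x)|
        + |x 0 * pd 0 v (pt t x) + t * pd 1 v (pt t x)|
        + |x 1 * pd 0 v (pt t x) + t * pd 2 v (pt t x)|
        + |x 2 * pd 0 v (pt t x) + t * pd 3 v (pt t x)| := by
    simp [VZ, Omg, Lb, Fin.sum_univ_succ, hp0, hp1, hp2, hp3]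
    ring
  have e3 : (∑ γ : Fin 4, |pd γ u (pt t x)|)
      = |pd 0 u (pt t x)| + |pd 1 u (pt t x)| + |pd 2 u (pt t x)| + |pd 3 u (pt t x)| := by
    simp [Fin.sum_univ_four]
  have e4 : (∑ γ : Fin 4, |pd γ v (pt t x)|)
      = |pd 0 v (pt t x)| + |pd 1 v (pt t x)| + |pd 2 v (pt t x)| + |pd 3 v (pt t x)| := by
    simp [Fin.sum_univ_four]
  rw [e1, e2, e3, e4]
  show |pd α u (pt t x) * pd β v (pt t x) - pd β u (pt t x) * pd α v (pt t x)| ≤ _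
  exact finish' hJ hJle key
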